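/- Let J be a nonempty proper subset of {0,…,d}. For every z ∈ M_J° and every x ∈ 𝔩(J), the element ι(x)z − zι(x) again lies in M_J°. -/

import Mathlib

open UniversalEnvelopingAlgebra

section Aux

variable (K : Type) [Field K] (d : ℕ)

/-- The shift operator corresponding to `ρ'(ι(E_{ab}))`. -/
noncomputable def RopST (a b : Fin (d+1)) :
    ((Fin (d+1) → ℤ) →₀ K) →ₗ[K] ((Fin (d+1) → ℤ) →₀ K) :=
  Finsupp.lsum K fun ν =>
    (ν b - 1 : ℤ) • (Finsupp.lsingle (ν + Pi.single a 1 - Pi.single b 1))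

/-- The intertwining operator `T_{ij}`. -/
noncomputable def TopST (i j : Fin (d+1)) :
    ((Fin (d+1) → ℤ) →₀ K) →ₗ[K] ((Fin (d+1) → ℤ) →₀ K) :=
  Finsupp.lsum K fun ν =>
    if ν i = 0 then
      (1 - ν j : ℤ) • (Finsupp.lsingle (ν + Pi.single i 1 - Pi.single j 1))
    else 0

variable {K d}

lemma RopST_single (a b : Fin (d+1)) (ν : Fin (d+1) → ℤ) (c : K) :
    RopST K d a b (Finsupp.single ν c) =
      (ν b - 1 : ℤ) • Finsupp.single (ν + Pi.single a 1 - Pi.single b 1) c := by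
  simp [RopST]

lemma TopST_single (i j : Fin (d+1)) (ν : Fin (d+1) → ℤ) (c : K) :
    TopST K d i j (Finsupp.single ν c) =
      if ν i = 0 then
        (1 - ν j : ℤ) • Finsupp.single (ν + Pi.single i 1 - Pi.single j 1) c
      else 0 := by
  simp only [TopST, Finsupp.lsum_single]
  split_ifs with h <;> simp

/-- The key commutation relation `T_{ij} ∘ R_{ab} = R_{ab} ∘ T_{ij}`. -/
lemma TopST_comm_RopST {a b i j : Fin (d+1)} (hai : a ≠ i) (haj : a ≠ j) (hij : i ≠ j)
    (v : (Fin (d+1) → ℤ) →₀ K) :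
    TopST K d i j (RopST K d a b v) = RopST K d a b (TopST K d i j v) := by
  have := congrFun (congrArg (fun (f : ((Fin (d+1) → ℤ) →₀ K) →ₗ[K] _) => (f : _ → _))
    (Finsupp.lhom_ext (φ := (TopST K d i j).comp (RopST K d a b))
      (ψ := (RopST K d a b).comp (TopST K d i j)) ?_)) v
  · simpa using this
  intro ν c
  simp only [LinearMap.comp_apply, RopST_single, TopST_single, map_zsmul,
    apply_ite (⇑(RopST K d a b)), map_zero, RopST_single, TopST_single]
  have eμ : ν + Pi.single a 1 - Pi.single b 1 + Pi.single i 1 - Pi.single j 1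
      = ν + Pi.single i 1 - Pi.single j 1 + Pi.single a 1 - Pi.single b 1 := by abel
  have sa_i : (Pi.single a 1 : Fin (d+1) → ℤ) i = 0 := by
    exact Pi.single_eq_of_ne (Ne.symm hai) 1
  have sa_j : (Pi.single a 1 : Fin (d+1) → ℤ) j = 0 := by
    exact Pi.single_eq_of_ne (Ne.symm haj) 1
  by_cases hbi : b = i
  · subst hbi
    have sb_j : (Pi.single b 1 : Fin (d+1) → ℤ) j = 0 := by
      exact Pi.single_eq_of_ne (Ne.symm hij) 1
    have sj_b : (Pi.single j 1 : Fin (d+1) → ℤ) b = 0 := by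
      exact Pi.single_eq_of_ne hij 1
    simp only [Pi.sub_apply, Pi.add_apply, sa_i, sa_j, sb_j, sj_b, Pi.single_eq_same,
      smul_ite, smul_zero, smul_smul]
    rw [eμ]
    split_ifs with h1 h2 h2
    · exfalso; omega
    · rw [show ν b - 1 = 0 by omega, zero_mul, zero_smul]
    · rw [show ν b + 1 - 0 - 1 = 0 by omega, mul_zero, zero_smul]
    · rfl
  · by_cases hbj : b = j
    · subst hbj
      have sb_i : (Pi.single b 1 : Fin (d+1) → ℤ) i = 0 := by
        exact Pi.single_eq_of_ne hij 1
      have si_b : (Pi.single i 1 : Fin (d+1) → ℤ) b = 0 := by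
        exact Pi.single_eq_of_ne (Ne.symm hij) 1
      simp only [Pi.sub_apply, Pi.add_apply, sa_i, sa_j, sb_i, si_b, Pi.single_eq_same,
        smul_ite, smul_zero, smul_smul]
      rw [eμ]
      split_ifs with h1 h2 h2
      · congr 1
        ring
      · exfalso; omega
      · exfalso; omega
      · rfl
    · have sb_i : (Pi.single b 1 : Fin (d+1) → ℤ) i = 0 := by
        exact Pi.single_eq_of_ne (fun h => hbi h.symm) 1
      have sb_j : (Pi.single b 1 : Fin (d+1) → ℤ) j = 0 := by
        exact Pi.single_eq_of_ne (fun h => hbj h.symm) 1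
      have si_b : (Pi.single i 1 : Fin (d+1) → ℤ) b = 0 := by
        exact Pi.single_eq_of_ne hbi 1
      have sj_b : (Pi.single j 1 : Fin (d+1) → ℤ) b = 0 := by
        exact Pi.single_eq_of_ne hbj 1
      simp only [Pi.sub_apply, Pi.add_apply, sa_i, sa_j, sb_i, sb_j, si_b, sj_b,
        Pi.single_eq_same, smul_ite, smul_zero, smul_smul]
      rw [eμ]
      split_ifs with h1 h2 h2
      · congr 1
        ring
      · exfalso; omega
      · exfalso; omega
      · rfl


/-- The target submodule `W` (span of B(J)-type vectors plus span of strictly-larger-support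
vectors). -/
noncomputable def WST (K : Type) [Field K] (d : ℕ) (J : Set (Fin (d+1))) :
    Submodule K ((Fin (d+1) → ℤ) →₀ K) :=
  Submodule.span K {w : (Fin (d+1) → ℤ) →₀ K | ∃ μ : Fin (d+1) → ℤ,
        (∑ k, μ k) = 0 ∧ (∀ k ∈ J, μ k = 1) ∧ (∀ k ∉ J, μ k ≤ 0) ∧
        w = Finsupp.single μ (1:K)} ⊔
  Submodule.span K {w : (Fin (d+1) → ℤ) →₀ K | ∃ μ : Fin (d+1) → ℤ,
        J ⊆ {k | 0 < μ k} ∧ J ≠ {k | 0 < μ k} ∧ w = Finsupp.single μ (1:K)}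

variable {J : Set (Fin (d+1))}

lemma memW1 {μ : Fin (d+1) → ℤ} (h0 : (∑ k, μ k) = 0) (h1 : ∀ k ∈ J, μ k = 1)
    (h2 : ∀ k ∉ J, μ k ≤ 0) : Finsupp.single μ (1:K) ∈ WST K d J :=
  Submodule.mem_sup_left (Submodule.subset_span ⟨μ, h0, h1, h2, rfl⟩)

lemma memW2 {μ : Fin (d+1) → ℤ} (h1 : J ⊆ {k | 0 < μ k}) (h2 : J ≠ {k | 0 < μ k}) :
    Finsupp.single μ (1:K) ∈ WST K d J :=
  Submodule.mem_sup_right (Submodule.subset_span ⟨μ, h1, h2, rfl⟩)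

lemma WST_map_mem {L : ((Fin (d+1) → ℤ) →₀ K) →ₗ[K] ((Fin (d+1) → ℤ) →₀ K)}
    (h1 : ∀ μ : Fin (d+1) → ℤ, (∑ k, μ k) = 0 → (∀ k ∈ J, μ k = 1) → (∀ k ∉ J, μ k ≤ 0) →
      L (Finsupp.single μ (1:K)) ∈ WST K d J)
    (h2 : ∀ μ : Fin (d+1) → ℤ, J ⊆ {k | 0 < μ k} → J ≠ {k | 0 < μ k} →
      L (Finsupp.single μ (1:K)) ∈ WST K d J)
    {w : (Fin (d+1) → ℤ) →₀ K} (hw : w ∈ WST K d J) : L w ∈ WST K d J := by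
  have key : Submodule.span K
      ({w : (Fin (d+1) → ℤ) →₀ K | ∃ μ : Fin (d+1) → ℤ,
        (∑ k, μ k) = 0 ∧ (∀ k ∈ J, μ k = 1) ∧ (∀ k ∉ J, μ k ≤ 0) ∧
        w = Finsupp.single μ (1:K)} ∪
       {w : (Fin (d+1) → ℤ) →₀ K | ∃ μ : Fin (d+1) → ℤ,
        J ⊆ {k | 0 < μ k} ∧ J ≠ {k | 0 < μ k} ∧ w = Finsupp.single μ (1:K)})
      ≤ (WST K d J).comap L := by
    rw [Submodule.span_le]
    rintro v (⟨μ, ha, hb, hc, rfl⟩ | ⟨μ, ha, hb, rfl⟩)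
    · exact h1 μ ha hb hc
    · exact h2 μ ha hb
  refine key ?_
  rw [Submodule.span_union]
  exact hw

lemma eval_shift (i j : Fin (d+1)) (μ : Fin (d+1) → ℤ) (k : Fin (d+1)) :
    (μ + Pi.single i 1 - Pi.single j 1 : Fin (d+1) → ℤ) k
      = μ k + (if k = i then 1 else 0) - (if k = j then 1 else 0) := by
  simp [Pi.single_apply]

lemma sum_shift (i j : Fin (d+1)) (μ : Fin (d+1) → ℤ) :
    (∑ k, (μ + Pi.single i 1 - Pi.single j 1 : Fin (d+1) → ℤ) k) = ∑ k, μ k := by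
  simp [Finset.sum_sub_distrib, Finset.sum_add_distrib, Finset.sum_pi_single']

/-- `T_{ij}` maps `W` into `W` when `i, j ∉ J`, `i ≠ j`. -/
lemma TopST_mem_WST {i j : Fin (d+1)} (hi : i ∉ J) (hj : j ∉ J) (hij : i ≠ j)
    {w : (Fin (d+1) → ℤ) →₀ K} (hw : w ∈ WST K d J) :
    TopST K d i j w ∈ WST K d J := by
  have main : ∀ μ : Fin (d+1) → ℤ, (∀ k ∈ J, 0 < μ k) →
      TopST K d i j (Finsupp.single μ (1:K)) ∈ WST K d J := by
    intro μ hpos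
    rw [TopST_single]
    split_ifs with hμi
    · refine zsmul_mem (memW2 ?_ ?_) _
      · intro k hk
        have hki : k ≠ i := fun h => hi (h ▸ hk)
        have hkj : k ≠ j := fun h => hj (h ▸ hk)
        simp only [Set.mem_setOf_eq]
        rw [eval_shift, if_neg hki, if_neg hkj]
        have := hpos k hk
        omega
      · intro hEq
        apply hi
        rw [hEq]
        simp only [Set.mem_setOf_eq]
        rw [eval_shift, if_pos rfl, if_neg hij]
        omega
    · exact Submodule.zero_mem _
  refine WST_map_mem ?_ ?_ hw
  · intro μ h0 h1 h2
    exact main μ (fun k hk => by rw [h1 k hk]; norm_num)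
  · intro μ h1 h2
    exact main μ (fun k hk => h1 hk)

/-- `R_{ij}` maps `W` into `W` when `i, j ∉ J`, `i ≠ j`. -/
lemma RopST_mem_WST {i j : Fin (d+1)} (hi : i ∉ J) (hj : j ∉ J) (hij : i ≠ j)
    {w : (Fin (d+1) → ℤ) →₀ K} (hw : w ∈ WST K d J) :
    RopST K d i j w ∈ WST K d J := by
  refine WST_map_mem ?_ ?_ hw
  · -- B(J)-type basis vectors
    intro μ h0 h1 h2
    rw [RopST_single]
    refine zsmul_mem ?_ _
    by_cases hμi : μ i = 0
    · -- lands in the second family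
      refine memW2 ?_ ?_
      · intro k hk
        have hki : k ≠ i := fun h => hi (h ▸ hk)
        have hkj : k ≠ j := fun h => hj (h ▸ hk)
        simp only [Set.mem_setOf_eq]
        rw [eval_shift, if_neg hki, if_neg hkj]
        have := h1 k hk
        omega
      · intro hEq
        apply hi
        rw [hEq]
        simp only [Set.mem_setOf_eq]
        rw [eval_shift, if_pos rfl, if_neg hij]
        omega
    · -- stays in the B(J) family
      refine memW1 ?_ ?_ ?_
      · rw [sum_shift]; exact h0
      · intro k hk
        have hki : k ≠ i := fun h => hi (h ▸ hk)
        have hkj : k ≠ j := fun h => hj (h ▸ hk)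
        rw [eval_shift, if_neg hki, if_neg hkj]
        have := h1 k hk
        omega
      · intro k hk
        rw [eval_shift]
        rcases eq_or_ne k i with h | hki
        · rw [if_pos h]
          rw [h] at hk ⊢
          rw [if_neg hij]
          have := h2 i hi
          omega
        · rw [if_neg hki]
          split_ifs with hkj
          · have := h2 k hk; omega
          · have := h2 k hk; omega
  · -- second family basis vectors
    intro μ hsub hne
    rw [RopST_single]
    by_cases hμj : μ j = 1
    · rw [show μ j - 1 = 0 by omega, zero_smul]
      exact Submodule.zero_mem _
    refine zsmul_mem (memW2 ?_ ?_) _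
    · intro k hk
      have hki : k ≠ i := fun h => hi (h ▸ hk)
      have hkj : k ≠ j := fun h => hj (h ▸ hk)
      simp only [Set.mem_setOf_eq]
      rw [eval_shift, if_neg hki, if_neg hkj]
      have : 0 < μ k := hsub hk
      omega
    · intro hEq
      obtain ⟨m, hmP, hmJ⟩ := Set.exists_of_ssubset (hsub.ssubset_of_ne hne)
      have hmP' : 0 < μ m := hmP
      by_cases hμi : 0 ≤ μ i
      · apply hi
        rw [hEq]
        simp only [Set.mem_setOf_eq]
        rw [eval_shift, if_pos rfl, if_neg hij]
        omega
      · rcases eq_or_ne m j with rfl | hmj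
        · apply hmJ
          rw [hEq]
          simp only [Set.mem_setOf_eq]
          rw [eval_shift, if_neg (fun h => hij h.symm), if_pos rfl]
          omega
        · apply hmJ
          rw [hEq]
          simp only [Set.mem_setOf_eq]
          have hmi : m ≠ i := fun h => by rw [h] at hmP'; omega
          rw [eval_shift, if_neg hmi, if_neg hmj]
          omega

end Aux

attribute [local instance 100] LieRing.ofAssociativeRing

/-- For J a nonempty proper subset of {0,…,d}, z ∈ M_J° and x ∈ 𝔩(J),
the commutator ι(x)z − zι(x) again lies in M_J° (M_J° is ad(𝔩(J))-invariant). -/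
theorem stmt_16 (K : Type) [Field K] [CharZero K] (d : ℕ) (hd : 1 ≤ d)
    (ρ' : UniversalEnvelopingAlgebra K (Matrix (Fin (d+1)) (Fin (d+1)) K) →ₐ[K]
        Module.End K ((Fin (d+1) → ℤ) →₀ K))
    (hρ'₁ : ∀ (i j : Fin (d+1)), i ≠ j → ∀ ν : Fin (d+1) → ℤ,
      ρ' (ι K (Matrix.single i j (1:K))) (Finsupp.single ν (1:K)) =
        (ν j - 1) • Finsupp.single (ν + Pi.single i 1 - Pi.single j 1) (1:K))
    (hρ'₂ : ∀ (k : Fin (d+1)) (ν : Fin (d+1) → ℤ),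
      ρ' (ι K (Matrix.single k k (1:K))) (Finsupp.single ν (1:K)) =
        ν k • Finsupp.single ν (1:K))
    (J : Set (Fin (d+1))) (hJ : J.Nonempty) (hJ' : J ≠ Set.univ)
    (AJ : Subalgebra K (UniversalEnvelopingAlgebra K (Matrix (Fin (d+1)) (Fin (d+1)) K)))
    (hAJ : AJ = Algebra.adjoin K
      {w | ∃ i ∈ J, ∃ j ∉ J, w = ι K (Matrix.single i j (1:K))})
    (z : UniversalEnvelopingAlgebra K (Matrix (Fin (d+1)) (Fin (d+1)) K))
    -- z ∈ M_J°
    (hz : z ∈ AJ)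
    (hzδ : ρ' z (Finsupp.single (0 : Fin (d+1) → ℤ) (1:K)) ∈
      Submodule.span K {w : (Fin (d+1) → ℤ) →₀ K | ∃ μ : Fin (d+1) → ℤ,
        (∑ k, μ k) = 0 ∧ (∀ k ∈ J, μ k = 1) ∧ (∀ k ∉ J, μ k ≤ 0) ∧
        w = Finsupp.single μ (1:K)} ⊔
      Submodule.span K {w : (Fin (d+1) → ℤ) →₀ K | ∃ μ : Fin (d+1) → ℤ,
        J ⊆ {k | 0 < μ k} ∧ J ≠ {k | 0 < μ k} ∧ w = Finsupp.single μ (1:K)})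
    (x : Matrix (Fin (d+1)) (Fin (d+1)) K)
    (hx : ∀ i j : Fin (d+1), i ∈ J ∨ j ∈ J → x i j = 0) :
    (ι K x * z - z * ι K x) ∈ AJ ∧
    ρ' (ι K x * z - z * ι K x) (Finsupp.single (0 : Fin (d+1) → ℤ) (1:K)) ∈
      Submodule.span K {w : (Fin (d+1) → ℤ) →₀ K | ∃ μ : Fin (d+1) → ℤ,
        (∑ k, μ k) = 0 ∧ (∀ k ∈ J, μ k = 1) ∧ (∀ k ∉ J, μ k ≤ 0) ∧
        w = Finsupp.single μ (1:K)} ⊔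
      Submodule.span K {w : (Fin (d+1) → ℤ) →₀ K | ∃ μ : Fin (d+1) → ℤ,
        J ⊆ {k | 0 < μ k} ∧ J ≠ {k | 0 < μ k} ∧ w = Finsupp.single μ (1:K)} := by
  subst hAJ
  set S : Set (UniversalEnvelopingAlgebra K (Matrix (Fin (d+1)) (Fin (d+1)) K)) :=
    {w | ∃ i ∈ J, ∃ j ∉ J, w = ι K (Matrix.single i j (1:K))} with hS
  -- identification of ρ' on the elementary matrices with the shift operators
  have hrho_eq : ∀ a b : Fin (d+1), a ≠ b →
      (ρ' (ι K (Matrix.single a b (1:K))) :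
        ((Fin (d+1) → ℤ) →₀ K) →ₗ[K] ((Fin (d+1) → ℤ) →₀ K)) = RopST K d a b := by
    intro a b hab
    apply Finsupp.lhom_ext
    intro ν c
    have h1 : (Finsupp.single ν c : (Fin (d+1) → ℤ) →₀ K) = c • Finsupp.single ν (1:K) := by
      rw [Finsupp.smul_single, smul_eq_mul, mul_one]
    rw [h1, map_smul, map_smul, hρ'₁ a b hab ν, RopST_single]
  -- z lies in the adjoin
  have hz' : z ∈ Algebra.adjoin K S := hz
  -- ρ' z δ₀ lies in W
  have hzδ' : ρ' z (Finsupp.single (0 : Fin (d+1) → ℤ) (1:K)) ∈ WST K d J := hzδ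
  -- ρ'(u) commutes with TopST for u in the adjoin
  have hcommz : ∀ i j : Fin (d+1), i ∉ J → j ∉ J → i ≠ j →
      ∀ u ∈ Algebra.adjoin K S, ∀ v,
        TopST K d i j (ρ' u v) = ρ' u (TopST K d i j v) := by
    intro i j hiJ hjJ hij u hu
    induction hu using Algebra.adjoin_induction with
    | mem w hw =>
      obtain ⟨a, haJ, b, hbJ, rfl⟩ := hw
      have hab : a ≠ b := fun h => hbJ (h ▸ haJ)
      have hai : a ≠ i := fun h => hiJ (h ▸ haJ)
      have haj : a ≠ j := fun h => hjJ (h ▸ haJ)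
      intro v
      rw [show (ρ' (ι K (Matrix.single a b (1:K)))
          (TopST K d i j v)) = RopST K d a b (TopST K d i j v) from
            congrFun (congrArg _ (hrho_eq a b hab)) _,
        show (ρ' (ι K (Matrix.single a b (1:K))) v) = RopST K d a b v from
            congrFun (congrArg _ (hrho_eq a b hab)) _]
      exact TopST_comm_RopST hai haj hij v
    | algebraMap r =>
      intro v
      rw [AlgHom.commutes]
      simp [Module.algebraMap_end_apply]
    | add u₁ u₂ hu₁ hu₂ ih₁ ih₂ =>
      intro v
      rw [map_add]
      simp only [LinearMap.add_apply, map_add, ih₁, ih₂]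
    | mul u₁ u₂ hu₁ hu₂ ih₁ ih₂ =>
      intro v
      rw [map_mul]
      simp only [Module.End.mul_apply]
      rw [ih₁, ih₂]
  -- Part 1 : membership in A_J
  have part1 : ∀ u ∈ Algebra.adjoin K S, (ι K x * u - u * ι K x) ∈ Algebra.adjoin K S := by
    intro u hu
    induction hu using Algebra.adjoin_induction with
    | mem w hw =>
      obtain ⟨a, haJ, b, hbJ, rfl⟩ := hw
      -- the commutator is ι of the matrix bracket
      have hbr : ι K x * ι K (Matrix.single a b (1:K)) -
          ι K (Matrix.single a b (1:K)) * ι K x =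
          ι K (x * Matrix.single a b (1:K) - Matrix.single a b (1:K) * x) := by
        have h := (ι K (L := Matrix (Fin (d+1)) (Fin (d+1)) K)).map_lie
          (x := x) (y := Matrix.single a b (1:K))
        rw [Ring.lie_def] at h
        rw [h, Ring.lie_def]
      rw [hbr]
      have hxE : x * Matrix.single a b (1:K) = 0 := by
        ext p q
        rcases eq_or_ne q b with rfl | hq
        · rw [Matrix.mul_single_apply_same, hx p a (Or.inr haJ), zero_mul]
          rfl
        · rw [Matrix.mul_single_apply_of_ne _ a b p q hq]
          rfl
      have hEx : Matrix.single a b (1:K) * x =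
          ∑ c, x b c • Matrix.single a c (1:K) := by
        ext p q
        rcases eq_or_ne p a with rfl | hp
        · rw [Matrix.single_mul_apply_same, one_mul]
          rw [Matrix.sum_apply]
          simp [Matrix.single, Finset.sum_ite_eq]
        · rw [Matrix.single_mul_apply_of_ne _ a b p q hp]
          rw [Matrix.sum_apply]
          simp [Matrix.single, Ne.symm hp]
      have hιsum : ι K (x * Matrix.single a b (1:K) -
          Matrix.single a b (1:K) * x) =
          -∑ c, x b c • ι K (Matrix.single a c (1:K)) := by
        rw [hxE, zero_sub, hEx, ← LieHom.coe_toLinearMap, map_neg, map_sum]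
        simp only [LinearMap.map_smul, LieHom.coe_toLinearMap]
      rw [hιsum]
      refine neg_mem (sum_mem fun c _ => ?_)
      by_cases hcJ : c ∈ J
      · rw [hx b c (Or.inr hcJ), zero_smul]
        exact zero_mem _
      · refine Subalgebra.smul_mem _ (Algebra.subset_adjoin ?_) _
        exact ⟨a, haJ, c, hcJ, rfl⟩
    | algebraMap r =>
      rw [Algebra.commutes r (ι K x), sub_self]
      exact zero_mem _
    | add u₁ u₂ hu₁ hu₂ ih₁ ih₂ =>
      have : ι K x * (u₁ + u₂) - (u₁ + u₂) * ι K x =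
          (ι K x * u₁ - u₁ * ι K x) + (ι K x * u₂ - u₂ * ι K x) := by noncomm_ring
      rw [this]
      exact add_mem ih₁ ih₂
    | mul u₁ u₂ hu₁ hu₂ ih₁ ih₂ =>
      have : ι K x * (u₁ * u₂) - (u₁ * u₂) * ι K x =
          (ι K x * u₁ - u₁ * ι K x) * u₂ + u₁ * (ι K x * u₂ - u₂ * ι K x) := by noncomm_ring
      rw [this]
      exact add_mem (mul_mem ih₁ hu₂) (mul_mem hu₁ ih₂)
  refine ⟨part1 z hz', ?_⟩
  -- Part 2 : the value on δ₀ stays in W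
  show _ ∈ WST K d J
  -- decomposition of ι x
  have e1 : ∀ i j : Fin (d+1), Matrix.single i j (x i j) =
      x i j • Matrix.single i j (1:K) := by
    intro i j
    rw [Matrix.smul_single, smul_eq_mul, mul_one]
  have hιdec : ι K x = ∑ i, ∑ j, x i j • ι K (Matrix.single i j (1:K)) := by
    conv_lhs => rw [Matrix.matrix_eq_sum_single x]
    rw [← LieHom.coe_toLinearMap, map_sum]
    refine Finset.sum_congr rfl fun i _ => ?_
    rw [map_sum]
    refine Finset.sum_congr rfl fun j _ => ?_
    rw [e1 i j, LinearMap.map_smul, LieHom.coe_toLinearMap]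
  have hxdec : (ρ' (ι K x) : Module.End K ((Fin (d+1) → ℤ) →₀ K)) =
      ∑ i, ∑ j, x i j • ρ' (ι K (Matrix.single i j (1:K))) := by
    rw [hιdec, map_sum]
    refine Finset.sum_congr rfl fun i _ => ?_
    rw [map_sum]
    refine Finset.sum_congr rfl fun j _ => ?_
    rw [map_smul]
  -- invariance of W under ρ'(ι E_{ij}) for i, j ∉ J
  have hWinv : ∀ i j : Fin (d+1), i ∉ J → j ∉ J →
      ∀ w ∈ WST K d J, ρ' (ι K (Matrix.single i j (1:K))) w ∈ WST K d J := by
    intro i j hiJ hjJ w hw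
    rcases eq_or_ne i j with rfl | hij
    · refine WST_map_mem (L := (ρ' (ι K (Matrix.single i i (1:K))) :
        ((Fin (d+1) → ℤ) →₀ K) →ₗ[K] ((Fin (d+1) → ℤ) →₀ K))) ?_ ?_ hw
      · intro μ h0 h1 h2
        rw [hρ'₂ i μ]
        exact zsmul_mem (memW1 h0 h1 h2) _
      · intro μ h1 h2
        rw [hρ'₂ i μ]
        exact zsmul_mem (memW2 h1 h2) _
    · have := congrFun (congrArg (fun (f : ((Fin (d+1) → ℤ) →₀ K) →ₗ[K] _) => (f : _ → _))
        (hrho_eq i j hij)) w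
      rw [show (ρ' (ι K (Matrix.single i j (1:K))) w) = RopST K d i j w from this]
      exact RopST_mem_WST hiJ hjJ hij hw
  rw [map_sub, map_mul, map_mul]
  simp only [LinearMap.sub_apply, Module.End.mul_apply]
  refine sub_mem ?_ ?_
  · -- first term
    rw [hxdec]
    simp only [LinearMap.sum_apply, LinearMap.smul_apply]
    refine sum_mem fun i _ => sum_mem fun j _ => ?_
    by_cases hiJ : i ∈ J
    · rw [hx i j (Or.inl hiJ), zero_smul]
      exact zero_mem _
    by_cases hjJ : j ∈ J
    · rw [hx i j (Or.inr hjJ), zero_smul]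
      exact zero_mem _
    exact Submodule.smul_mem _ _ (hWinv i j hiJ hjJ _ hzδ')
  · -- second term
    rw [hxdec]
    simp only [LinearMap.sum_apply, LinearMap.smul_apply, map_sum, map_smul]
    refine sum_mem fun i _ => sum_mem fun j _ => ?_
    by_cases hiJ : i ∈ J
    · rw [hx i j (Or.inl hiJ), zero_smul]
      exact zero_mem _
    by_cases hjJ : j ∈ J
    · rw [hx i j (Or.inr hjJ), zero_smul]
      exact zero_mem _
    refine Submodule.smul_mem _ _ ?_
    rcases eq_or_ne i j with rfl | hij
    · rw [hρ'₂ i 0]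
      simp only [Pi.zero_apply, zero_smul, map_zero]
      exact zero_mem _
    · rw [hρ'₁ i j hij 0]
      have hT : TopST K d i j (Finsupp.single (0 : Fin (d+1) → ℤ) (1:K)) =
          Finsupp.single ((0 : Fin (d+1) → ℤ) + Pi.single i 1 - Pi.single j 1) (1:K) := by
        rw [TopST_single]
        simp
      rw [map_zsmul, ← hT, ← hcommz i j hiJ hjJ hij z hz']
      exact zsmul_mem (TopST_mem_WST hiJ hjJ hij hzδ') _
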